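/- Let F : (ℂ^p,0) → (ℂ^m,0) be a formal mapping, X_1, X_2 formal vector fields on ℂ^p, Y_1, Y_2 formal vector fields on ℂ^m, and suppose there are nonzero c_1, c_2 ∈ ℂ[[x]] such that X_j(f∘F) = c_j·((Y_j f)∘F) for all f ∈ ℂ[[y]] and j = 1,2. Then there exist a formal vector field X' on ℂ^p and a nonzero c' ∈ ℂ[[x]] such that X'(f∘F) = c'·(([Y_1,Y_2]f)∘F) for all f ∈ ℂ[[y]], where [ , ] is the commutator of vector fields. In fact one may take c' = (c_1c_2)^2 and X' = c_1c_2[X_1,X_2] + c_2(X_2c_1)X_1 − c_1(X_1c_2)X_2. -/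

import Mathlib

noncomputable section

namespace Segre

open MvPowerSeries

/-- Formal power series with complex coefficients. -/
abbrev PS (σ : Type*) := MvPowerSeries σ ℂ

/-- Build a power series from its coefficient function. -/
def ofFun {σ : Type*} (g : (σ →₀ ℕ) → ℂ) : PS σ := g

/-- Coefficientwise complex conjugation of a formal power series. -/
def conjPS {σ : Type*} (f : PS σ) : PS σ := MvPowerSeries.map (starRingEnd ℂ) f

/-- Formal partial derivative of a formal power series. -/
def pd {σ : Type*} [DecidableEq σ] (j : σ) (f : PS σ) : PS σ :=
  ofFun fun m => ((m j : ℂ) + 1) * MvPowerSeries.coeff (m + Finsupp.single j 1) f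

/-- Reindexing of variables along an equivalence. -/
def reindexPS {σ τ : Type*} (e : σ ≃ τ) (f : PS σ) : PS τ :=
  ofFun fun m => MvPowerSeries.coeff (Finsupp.equivMapDomain e.symm m) f

/-- Formal composition (substitution) `f ∘ F` of a formal power series
`f` in the variables `τ` with a family `F` of power series without constant
term.  (For families with nonvanishing constant term the value is junk.) -/
def cmp {τ σ : Type*} [Fintype τ] [DecidableEq τ] (f : PS τ) (F : τ → PS σ) : PS σ :=
  ofFun fun m => MvPowerSeries.coeff m
    (∑ α ∈ Finset.Iic (Finsupp.equivFunOnFinite.symm fun _ => m.sum fun _ k => k),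
      MvPowerSeries.coeff α f • ∏ i, F i ^ α i)

/-- Renaming of variables along an (injective) map. -/
def injPS {σ τ : Type*} [Fintype σ] [DecidableEq σ] (ι : σ → τ) (f : PS σ) : PS τ :=
  cmp f fun s => MvPowerSeries.X (ι s)

/-- The "generic rank" of a matrix over a commutative ring: the largest size of a
nonvanishing minor. -/
def matGenRank {α β R : Type*} [Fintype α] [Fintype β] [CommRing R] (M : Matrix α β R) : ℕ :=
  sSup {s | ∃ (r : Fin s ↪ α) (c : Fin s ↪ β), (M.submatrix r c).det ≠ 0}

/-- The Jacobian matrix of a formal mapping. -/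
def jac {σ ι : Type*} [DecidableEq σ] (F : ι → PS σ) : Matrix ι σ (PS σ) :=
  Matrix.of fun i j => pd j (F i)

/-- The rank `Rk F` of a formal mapping: the largest size of a nonvanishing minor of the
Jacobian matrix, i.e. the rank of the Jacobian matrix over the fraction field. -/
def rk {σ ι : Type*} [Fintype σ] [DecidableEq σ] [Fintype ι] (F : ι → PS σ) : ℕ :=
  matGenRank (jac F)

/-- The rank at `0` of the Jacobian matrix of a formal mapping. -/
def rk0 {σ ι : Type*} [Fintype σ] [DecidableEq σ] [Fintype ι] (F : ι → PS σ) : ℕ :=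
  Matrix.rank ((jac F).map (MvPowerSeries.constantCoeff (σ := σ) (R := ℂ)))

/-- A formal mapping: each component has vanishing constant term. -/
def IsFormalMap {σ ι : Type*} (F : ι → PS σ) : Prop :=
  ∀ i, MvPowerSeries.constantCoeff (σ := σ) (R := ℂ) (F i) = 0

/-- The differential at `0` of a formal power series. -/
def diff0 {σ : Type*} [DecidableEq σ] (f : PS σ) : σ → ℂ :=
  fun j => MvPowerSeries.constantCoeff (σ := σ) (R := ℂ) (pd j f)

/-- `I` is the manifold ideal with generators `f`: the generators have no constant
term, generate `I`, and have linearly independent differentials at `0`. -/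
def IsMfldIdealWith {σ ι : Type*} [Fintype σ] [DecidableEq σ]
    (I : Ideal (PS σ)) (f : ι → PS σ) : Prop :=
  (∀ i, MvPowerSeries.constantCoeff (σ := σ) (R := ℂ) (f i) = 0) ∧
  I = Ideal.span (Set.range f) ∧
  LinearIndependent ℂ fun i => diff0 (f i)

/-- `I` is a manifold ideal of codimension `d`. -/
def IsMfldIdeal {σ : Type*} [Fintype σ] [DecidableEq σ] (I : Ideal (PS σ)) (d : ℕ) : Prop :=
  ∃ f : Fin d → PS σ, IsMfldIdealWith I f

/-- A formal vector field, given by its coefficients. -/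
abbrev VF (σ : Type*) := σ → PS σ

/-- The action of a formal vector field (as a derivation) on a power series. -/
def vfApply {σ : Type*} [Fintype σ] [DecidableEq σ] (X : VF σ) (f : PS σ) : PS σ :=
  ∑ j, X j * pd j f

/-- The Lie bracket (commutator) of two formal vector fields. -/
def vfBracket {σ : Type*} [Fintype σ] [DecidableEq σ] (X Y : VF σ) : VF σ :=
  fun j => vfApply X (Y j) - vfApply Y (X j)

/-- Evaluation of a formal vector field at the origin. -/
def vfEval0 {σ : Type*} (X : VF σ) : σ → ℂ :=
  fun j => MvPowerSeries.constantCoeff (σ := σ) (R := ℂ) (X j)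

/-- A formal vector field is tangent to (the formal manifold defined by) an ideal if it
maps the ideal into itself. -/
def Tangent {σ : Type*} [Fintype σ] [DecidableEq σ] (X : VF σ) (I : Ideal (PS σ)) : Prop :=
  ∀ f ∈ I, vfApply X f ∈ I

/-- The Lie algebra (of formal vector fields) generated by a set `S`. -/
inductive lieGen {σ : Type*} [Fintype σ] [DecidableEq σ] (S : Set (VF σ)) : VF σ → Prop
  | base {X} : X ∈ S → lieGen S X
  | add {X Y} : lieGen S X → lieGen S Y → lieGen S (X + Y)
  | smul (c : ℂ) {X} : lieGen S X → lieGen S (fun j => (MvPowerSeries.C (σ := σ) (R := ℂ) c) * X j)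
  | bracket {X Y} : lieGen S X → lieGen S Y → lieGen S (vfBracket X Y)

/-- A set of formal vector fields which is a Lie algebra and a `ℂ[[x]]`-module. -/
structure IsLieMod {σ : Type*} [Fintype σ] [DecidableEq σ] (g : Set (VF σ)) : Prop where
  add_mem : ∀ {X Y : VF σ}, X ∈ g → Y ∈ g → X + Y ∈ g
  smul_mem : ∀ (a : PS σ) {X : VF σ}, X ∈ g → (fun j => a * X j) ∈ g
  bracket_mem : ∀ {X Y : VF σ}, X ∈ g → Y ∈ g → vfBracket X Y ∈ g

/-- The involution `σ(f)(Z,ζ) = conj f(ζ,Z)` on power series in `(Z,ζ)`. -/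
def realOp {σZ : Type*} (f : PS (σZ ⊕ σZ)) : PS (σZ ⊕ σZ) :=
  conjPS (reindexPS (Equiv.sumComm σZ σZ) f)

/-- The matrix `∂ρ/∂Z` of the derivatives of `ρ` in the first (holomorphic) block of
variables. -/
def zJac {σZ ι : Type*} [DecidableEq σZ] (ρ : ι → PS (σZ ⊕ σZ)) : Matrix ι σZ (PS (σZ ⊕ σZ)) :=
  Matrix.of fun l j => pd (Sum.inl j) (ρ l)

/-- `I` is the ideal of a formal generic manifold of codimension `d`, with given
generators `ρ`: `I` is a real manifold ideal and `∂ρ/∂Z(0)` has rank `d`. -/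
def IsGenericMfld {σZ : Type*} [Fintype σZ] [DecidableEq σZ] {d : ℕ}
    (I : Ideal (PS (σZ ⊕ σZ))) (ρ : Fin d → PS (σZ ⊕ σZ)) : Prop :=
  IsMfldIdealWith I ρ ∧ (∀ f ∈ I, realOp f ∈ I) ∧
  Matrix.rank ((zJac ρ).map (MvPowerSeries.constantCoeff (R := ℂ))) = d

/-- The set of formal `(1,0)` and `(0,1)` vector fields tangent to (the manifold defined
by) `I`. -/
def holFields {σZ : Type*} [Fintype σZ] [DecidableEq σZ] (I : Ideal (PS (σZ ⊕ σZ))) :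
    Set (VF (σZ ⊕ σZ)) :=
  {X | ((∀ j, X (Sum.inr j) = 0) ∨ (∀ j, X (Sum.inl j) = 0)) ∧ Tangent X I}

/-- `dim_ℂ g_M(0)`, where `g_M` is the Lie algebra generated by the formal `(1,0)` and
`(0,1)` vector fields tangent to `M`. -/
def gMDim {σZ : Type*} [Fintype σZ] [DecidableEq σZ] (I : Ideal (PS (σZ ⊕ σZ))) : ℕ :=
  Module.finrank ℂ (Submodule.span ℂ (vfEval0 '' {X | lieGen (holFields I) X}))

/-- `γ(ζ,t)` is a Segre variety mapping for the (formal generic manifold with) defining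
series `ρ`:  `γ` has no constant term, `ρ(γ(ζ,t),ζ) = 0`, and `∂γ/∂t(0)` has rank `n`. -/
def IsSegreMap {n d : ℕ} (ρ : Fin d → PS (Fin (n + d) ⊕ Fin (n + d)))
    (γ : Fin (n + d) → PS (Fin (n + d) ⊕ Fin n)) : Prop :=
  IsFormalMap γ ∧
  (∀ l, cmp (ρ l) (Sum.elim γ fun j => MvPowerSeries.X (Sum.inl j)) = 0) ∧
  Matrix.rank
    (Matrix.of fun (i : Fin (n + d)) (j : Fin n) =>
      MvPowerSeries.constantCoeff (R := ℂ) (pd (Sum.inr j) (γ i))) = n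

/-- The iterated Segre mappings: `iterSegre γ j` is `v^{j+1}`, a formal mapping from
`ℂ^{(j+1)n}` (with variables indexed by `Fin (j+1) × Fin n`) to `ℂ^N`. -/
def iterSegre {n d : ℕ} (γ : Fin (n + d) → PS (Fin (n + d) ⊕ Fin n)) :
    (j : ℕ) → Fin (n + d) → PS (Fin (j + 1) × Fin n)
  | 0 => fun c =>
      cmp (γ c) (Sum.elim (fun _ => 0) fun i => MvPowerSeries.X ((0 : Fin 1), i))
  | m + 1 => fun c =>
      cmp (γ c)
        (Sum.elim
          (fun z => conjPS (injPS (fun p : Fin (m + 1) × Fin n => (p.1.castSucc, p.2))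
            (iterSegre γ m z)))
          (fun i => MvPowerSeries.X (Fin.last (m + 1), i)))



section AuxLemmas

variable {σ : Type*} [DecidableEq σ]

lemma coeff_pd (j : σ) (m : σ →₀ ℕ) (f : PS σ) :
    MvPowerSeries.coeff m (pd j f) =
      ((m j : ℂ) + 1) * MvPowerSeries.coeff (m + Finsupp.single j 1) f := rfl

lemma pd_add (j : σ) (f g : PS σ) : pd j (f + g) = pd j f + pd j g := by
  ext m
  simp [coeff_pd, map_add, mul_add]

lemma pd_zero (j : σ) : pd j (0 : PS σ) = 0 := by
  ext m; simp [coeff_pd]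

/-- Auxiliary weight function for the Leibniz rule. -/
def wgt (j : σ) (f g : PS σ) (p : (σ →₀ ℕ) × (σ →₀ ℕ)) : ℂ :=
  (p.2 j : ℂ) * (MvPowerSeries.coeff p.1 f * MvPowerSeries.coeff p.2 g)

lemma coeff_mul_pd (j : σ) (m : σ →₀ ℕ) (f g : PS σ) :
    MvPowerSeries.coeff m (f * pd j g) =
      ∑ p ∈ Finset.HasAntidiagonal.antidiagonal (m + Finsupp.single j 1), wgt j f g p := by
  rw [MvPowerSeries.coeff_mul]
  rw [← Finset.sum_filter_of_ne (p := fun (p : (σ →₀ ℕ) × (σ →₀ ℕ)) => p.2 j ≠ 0)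
    (f := wgt j f g)]
  · refine Finset.sum_nbij' (fun q => (q.1, q.2 + Finsupp.single j 1))
      (fun p => (p.1, p.2 - Finsupp.single j 1)) ?_ ?_ ?_ ?_ ?_
    · intro q hq
      simp only [Finset.HasAntidiagonal.mem_antidiagonal] at hq
      simp only [Finset.mem_filter, Finset.HasAntidiagonal.mem_antidiagonal]
      refine ⟨by rw [← add_assoc, hq], by simp⟩
    · intro p hp
      simp only [Finset.mem_filter, Finset.HasAntidiagonal.mem_antidiagonal] at hp
      obtain ⟨h1, h2⟩ := hp
      have hle : Finsupp.single j 1 ≤ p.2 := by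
        rw [Finsupp.single_le_iff]; omega
      simp only [Finset.HasAntidiagonal.mem_antidiagonal]
      have h3 : p.1 + (p.2 - Finsupp.single j 1) + Finsupp.single j 1
          = m + Finsupp.single j 1 := by
        rw [add_assoc, tsub_add_cancel_of_le hle, h1]
      exact add_right_cancel h3
    · intro q hq; simp
    · intro p hp
      simp only [Finset.mem_filter, Finset.HasAntidiagonal.mem_antidiagonal] at hp
      have hle : Finsupp.single j 1 ≤ p.2 := by
        rw [Finsupp.single_le_iff]; omega
      simp [tsub_add_cancel_of_le hle]
    · intro q hq
      simp only [wgt, coeff_pd, Finsupp.add_apply, Finsupp.single_apply, if_pos rfl]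
      push_cast
      ring
  · intro p _ h
    rcases eq_or_ne (p.2 j) 0 with h0 | h0
    · exact absurd (by simp [wgt, h0]) h
    · exact h0

lemma pd_mul (j : σ) (f g : PS σ) : pd j (f * g) = f * pd j g + g * pd j f := by
  ext m
  rw [map_add, coeff_mul_pd, coeff_mul_pd, coeff_pd, MvPowerSeries.coeff_mul]
  rw [Finset.mul_sum]
  have hswap : ∑ p ∈ Finset.HasAntidiagonal.antidiagonal (m + Finsupp.single j 1), wgt j g f p
      = ∑ p ∈ Finset.HasAntidiagonal.antidiagonal (m + Finsupp.single j 1), wgt j g f (p.2, p.1) :=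
    Finsupp.sum_antidiagonal_swap (m + Finsupp.single j 1) (fun a b => wgt j g f (a, b))
  rw [hswap, ← Finset.sum_add_distrib]
  refine Finset.sum_congr rfl fun p hp => ?_
  simp only [Finset.HasAntidiagonal.mem_antidiagonal] at hp
  have hj : p.1 j + p.2 j = m j + 1 := by
    have := DFunLike.congr_fun hp j
    simpa using this
  have hc : ((p.1 j : ℂ)) + (p.2 j : ℂ) = (m j : ℂ) + 1 := by
    exact_mod_cast congrArg (Nat.cast : ℕ → ℂ) hj
  rw [show ((m j : ℂ) + 1) = (p.1 j : ℂ) + (p.2 j : ℂ) from hc.symm]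
  simp only [wgt]
  ring

lemma pd_comm (j k : σ) (f : PS σ) : pd j (pd k f) = pd k (pd j f) := by
  ext m
  simp only [coeff_pd]
  rw [add_right_comm]
  rcases eq_or_ne j k with rfl | h
  · ring
  · rw [Finsupp.add_apply, Finsupp.add_apply, Finsupp.single_apply, Finsupp.single_apply]
    simp [h, Ne.symm h]
    ring

lemma coeff_ofFun (h : (σ →₀ ℕ) → ℂ) (m : σ →₀ ℕ) :
    MvPowerSeries.coeff m (ofFun h) = h m := rfl

lemma pd_sum {ι : Type*} (s : Finset ι) (j : σ) (f : ι → PS σ) :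
    pd j (∑ k ∈ s, f k) = ∑ k ∈ s, pd j (f k) := by
  classical
  induction s using Finset.induction_on with
  | empty => simp [pd_zero]
  | @insert _ _ h ih => rw [Finset.sum_insert h, Finset.sum_insert h, pd_add, ih]

variable [Fintype σ]

lemma cmp_sub {τ : Type*} {σ' : Type*} [Fintype τ] [DecidableEq τ] (f g : PS τ)
    (F : τ → PS σ') : cmp (f - g) F = cmp f F - cmp g F := by
  ext m
  simp only [cmp, coeff_ofFun, map_sub, sub_smul, Finset.sum_sub_distrib, map_sub]

lemma vfApply_mul (X : VF σ) (f g : PS σ) :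
    vfApply X (f * g) = f * vfApply X g + g * vfApply X f := by
  simp only [vfApply, pd_mul, mul_add, Finset.sum_add_distrib, Finset.mul_sum]
  congr 1 <;> exact Finset.sum_congr rfl fun j _ => by ring

lemma vfApply_expand (X Y : VF σ) (g : PS σ) :
    vfApply X (vfApply Y g)
      = (∑ j, ∑ k, X j * (Y k * pd j (pd k g)))
        + ∑ k, vfApply X (Y k) * pd k g := by
  calc vfApply X (vfApply Y g)
      = ∑ j, ∑ k, (X j * (Y k * pd j (pd k g)) + X j * (pd k g * pd j (Y k))) := by
        simp only [vfApply, pd_sum, pd_mul, mul_add, Finset.mul_sum]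
    _ = (∑ j, ∑ k, X j * (Y k * pd j (pd k g)))
        + ∑ j, ∑ k, X j * (pd k g * pd j (Y k)) := by
        rw [← Finset.sum_add_distrib]
        exact Finset.sum_congr rfl fun j _ => Finset.sum_add_distrib
    _ = (∑ j, ∑ k, X j * (Y k * pd j (pd k g)))
        + ∑ k, vfApply X (Y k) * pd k g := by
        congr 1
        rw [Finset.sum_comm]
        refine Finset.sum_congr rfl fun k _ => ?_
        rw [vfApply, Finset.sum_mul]
        exact Finset.sum_congr rfl fun j _ => by ring

lemma vfApply_bracket (X Y : VF σ) (g : PS σ) :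
    vfApply (vfBracket X Y) g
      = vfApply X (vfApply Y g) - vfApply Y (vfApply X g) := by
  rw [vfApply_expand, vfApply_expand]
  have hsym : (∑ j, ∑ k, X j * (Y k * pd j (pd k g)))
      = ∑ j, ∑ k, Y j * (X k * pd j (pd k g)) := by
    rw [Finset.sum_comm]
    refine Finset.sum_congr rfl fun k _ => Finset.sum_congr rfl fun j _ => ?_
    rw [pd_comm]; ring
  rw [hsym]
  have hh : vfApply (vfBracket X Y) g
      = ∑ k, vfApply X (Y k) * pd k g - ∑ k, vfApply Y (X k) * pd k g := by
    rw [vfApply, ← Finset.sum_sub_distrib]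
    exact Finset.sum_congr rfl fun k _ => by rw [vfBracket]; ring
  rw [hh]; ring

lemma vfApply_comb (a b c : PS σ) (X Y Z : VF σ) (g : PS σ) :
    vfApply (fun j => a * X j + b * Y j - c * Z j) g
      = a * vfApply X g + b * vfApply Y g - c * vfApply Z g := by
  simp only [vfApply, add_mul, sub_mul, mul_assoc, Finset.sum_add_distrib,
    Finset.sum_sub_distrib, Finset.mul_sum]

end AuxLemmas

/-- Commutators of pushed-forward vector fields: one may take
`c' = (c₁c₂)²` and `X' = c₁c₂[X₁,X₂] + c₂(X₂c₁)X₁ − c₁(X₁c₂)X₂`. -/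
theorem statement_17 {p m : ℕ} (F : Fin m → PS (Fin p)) (hF0 : IsFormalMap F)
    (X₁ X₂ : VF (Fin p)) (Y₁ Y₂ : VF (Fin m)) (c₁ c₂ : PS (Fin p))
    (hc₁ : c₁ ≠ 0) (hc₂ : c₂ ≠ 0)
    (h1 : ∀ f : PS (Fin m), vfApply X₁ (cmp f F) = c₁ * cmp (vfApply Y₁ f) F)
    (h2 : ∀ f : PS (Fin m), vfApply X₂ (cmp f F) = c₂ * cmp (vfApply Y₂ f) F) :
    (∃ (X' : VF (Fin p)) (c' : PS (Fin p)), c' ≠ 0 ∧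
      ∀ f : PS (Fin m),
        vfApply X' (cmp f F) = c' * cmp (vfApply (vfBracket Y₁ Y₂) f) F) ∧
    ((c₁ * c₂) ^ 2 ≠ 0 ∧
      ∀ f : PS (Fin m),
        vfApply
            (fun j => c₁ * c₂ * vfBracket X₁ X₂ j
              + c₂ * vfApply X₂ c₁ * X₁ j - c₁ * vfApply X₁ c₂ * X₂ j)
            (cmp f F) =
          (c₁ * c₂) ^ 2 * cmp (vfApply (vfBracket Y₁ Y₂) f) F) := by
  have nz : (c₁ * c₂) ^ 2 ≠ 0 := pow_ne_zero _ (mul_ne_zero hc₁ hc₂)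
  have key : ∀ f : PS (Fin m),
      vfApply
          (fun j => c₁ * c₂ * vfBracket X₁ X₂ j
            + c₂ * vfApply X₂ c₁ * X₁ j - c₁ * vfApply X₁ c₂ * X₂ j)
          (cmp f F)
        = (c₁ * c₂) ^ 2 * cmp (vfApply (vfBracket Y₁ Y₂) f) F := by
    intro f
    have e12 : vfApply X₁ (vfApply X₂ (cmp f F))
        = c₂ * (c₁ * cmp (vfApply Y₁ (vfApply Y₂ f)) F)
          + cmp (vfApply Y₂ f) F * vfApply X₁ c₂ := by
      rw [h2 f, vfApply_mul, h1 (vfApply Y₂ f)]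
    have e21 : vfApply X₂ (vfApply X₁ (cmp f F))
        = c₁ * (c₂ * cmp (vfApply Y₂ (vfApply Y₁ f)) F)
          + cmp (vfApply Y₁ f) F * vfApply X₂ c₁ := by
      rw [h1 f, vfApply_mul, h2 (vfApply Y₁ f)]
    rw [vfApply_comb, vfApply_bracket, e12, e21, h1 f, h2 f,
      show vfApply (vfBracket Y₁ Y₂) f
          = vfApply Y₁ (vfApply Y₂ f) - vfApply Y₂ (vfApply Y₁ f)
        from vfApply_bracket Y₁ Y₂ f,
      cmp_sub]
    ring
  exact ⟨⟨_, (c₁ * c₂) ^ 2, nz, key⟩, nz, key⟩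


end Segre
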